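/- arXiv:2108.12638 — 2 statements merged into one kernel-verified Lean document; each statement's English description precedes it below -/
import Mathlib

section
/- Let f be a transcendental entire function and suppose there exist α > 1 and r₀ > 0 such that for every r ≥ r₀ there exists σ with r ≤ σ ≤ r^α and L(σ,f) = M(r,f). Define R_{n+1} = M(R_n^{1/(2α)}, f) with R₁ sufficiently large, and set t_n = (1/(2α))·R_n^{1/(2α)}·log R_n. Then for each sufficiently large n there exists σ_n with t_n ≤ σ_n ≤ t_n^α such that L(σ_n, f) = M(t_n, f) ≥ t_{n+1}^α; in particular σ_n → ∞ and liminf_{n→∞} L(σ_n, f) = ∞. -/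
open Filter MeasureTheory Topology

/-- The maximum modulus `M(r, f) = max {|f z| : |z| = r}`. -/
noncomputable def maxMod (f : ℂ → ℂ) (r : ℝ) : ℝ :=
  sSup ((fun z => ‖f z‖) '' Metric.sphere (0 : ℂ) r)

/-- The minimum modulus `L(r, f) = min {|f z| : |z| = r}`. -/
noncomputable def minMod (f : ℂ → ℂ) (r : ℝ) : ℝ :=
  sInf ((fun z => ‖f z‖) '' Metric.sphere (0 : ℂ) r)

/-- A transcendental entire function: entire and not a polynomial. -/
def TranscendentalEntire (f : ℂ → ℂ) : Prop :=
  Differentiable ℂ f ∧ ¬ ∃ p : Polynomial ℂ, ∀ z, f z = p.eval z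

lemma maxMod_bddAbove (f : ℂ → ℂ) (hf : Continuous f) (r : ℝ) :
    BddAbove ((fun z => ‖f z‖) '' Metric.sphere (0 : ℂ) r) :=
  ((isCompact_sphere 0 r).image (continuous_norm.comp hf)).bddAbove

lemma le_maxMod (f : ℂ → ℂ) (hf : Continuous f) {r : ℝ} {z : ℂ}
    (hz : z ∈ Metric.sphere (0 : ℂ) r) : ‖f z‖ ≤ maxMod f r :=
  le_csSup (maxMod_bddAbove f hf r) ⟨z, hz, rfl⟩

lemma maxMod_nonneg (f : ℂ → ℂ) (hf : Continuous f) {r : ℝ} (hr : 0 ≤ r) :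
    0 ≤ maxMod f r :=
  le_trans (norm_nonneg _)
    (le_maxMod f hf (z := (r : ℂ)) (by simp [abs_of_nonneg hr]))

lemma maxMod_mono (f : ℂ → ℂ) (hf : Differentiable ℂ f) {r s : ℝ}
    (h0 : 0 ≤ r) (hrs : r ≤ s) : maxMod f r ≤ maxMod f s := by
  rcases eq_or_lt_of_le (h0.trans hrs) with h | hs
  · have : r = s := le_antisymm hrs (by linarith [h0, h.symm.le])
    rw [this]
  · apply Real.sSup_le _ (maxMod_nonneg f hf.continuous (h0.trans hrs))
    rintro x ⟨z, hz, rfl⟩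
    have hzc : z ∈ closure (Metric.ball (0 : ℂ) s) := by
      rw [closure_ball (0 : ℂ) hs.ne']
      simp only [Metric.mem_sphere] at hz
      simp [Metric.mem_closedBall, hz, hrs]
    exact Complex.norm_le_of_forall_mem_frontier_norm_le (Metric.isBounded_ball)
      hf.diffContOnCl (C := maxMod f s) (fun w hw => by
        rw [frontier_ball (0 : ℂ) hs.ne'] at hw
        exact le_maxMod f hf.continuous hw) hzc

lemma key_ineq {α : ℝ} (hα : 1 < α) {x : ℝ} (hx : Real.exp (2 * α) ≤ x) :
    ((1 / (2 * α)) * x ^ (1 / (2 * α)) * Real.log x) ^ α ≤ x := by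
  have h2α : (0:ℝ) < 2 * α := by linarith
  have hx0 : (0:ℝ) < x := lt_of_lt_of_le (Real.exp_pos _) hx
  set y := Real.log x with hy
  have hyge : 2 * α ≤ y := by
    have := Real.log_le_log (Real.exp_pos _) hx
    rwa [Real.log_exp] at this
  have hy0 : 0 < y := lt_of_lt_of_le h2α hyge
  set t := (1 / (2 * α)) * x ^ (1 / (2 * α)) * y with htdef
  have hrp : (0:ℝ) < x ^ (1 / (2 * α)) := Real.rpow_pos_of_pos hx0 _
  have ht0 : 0 < t := by positivity
  have hlogt : Real.log t = -Real.log (2 * α) + (1 / (2 * α)) * y + Real.log y := by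
    rw [htdef, Real.log_mul (by positivity) hy0.ne', Real.log_mul (by positivity) hrp.ne',
      Real.log_rpow hx0, one_div, Real.log_inv]
  have hkey : α * Real.log t ≤ y := by
    have h1 : Real.log (y / (2 * α)) ≤ y / (2 * α) := le_trans
      (Real.log_le_sub_one_of_pos (by positivity)) (by linarith)
    have h2 : Real.log (y / (2 * α)) = Real.log y - Real.log (2 * α) :=
      Real.log_div hy0.ne' h2α.ne'
    have h3 : α * Real.log t = y / 2 + α * (Real.log y - Real.log (2 * α)) := by
      rw [hlogt]; field_simp; ring
    rw [h3, ← h2]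
    have h4 : α * Real.log (y / (2 * α)) ≤ α * (y / (2 * α)) :=
      mul_le_mul_of_nonneg_left h1 (by linarith)
    have h5 : α * (y / (2 * α)) = y / 2 := by field_simp
    linarith [h4, h5 ▸ h4]
  calc t ^ α = Real.exp (Real.log t * α) := Real.rpow_def_of_pos ht0 α
    _ ≤ Real.exp y := Real.exp_le_exp.mpr (by linarith [hkey])
    _ = x := Real.exp_log hx0

/-- Step 3 of the proof: with `t_n = (1/(2α)) R_n^{1/(2α)} log R_n`, for each sufficiently
large `n` there is `σ_n ∈ [t_n, t_n^α]` with `L(σ_n,f) = M(t_n,f) ≥ t_{n+1}^α`; in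
particular `σ_n → ∞` and `liminf_{n→∞} L(σ_n,f) = ∞`. -/
theorem exists_sigma_sequence (f : ℂ → ℂ) (hf : TranscendentalEntire f)
    (α r₀ : ℝ) (hα : 1 < α) (hr₀ : 0 < r₀)
    (hstep1 : ∀ r ≥ r₀, ∃ σ : ℝ, r ≤ σ ∧ σ ≤ r ^ α ∧ minMod f σ = maxMod f r)
    (R : ℕ → ℝ)
    (hRrec : ∀ n : ℕ, R (n + 1) = maxMod f ((R n) ^ (1 / (2 * α))))
    (hR₀ : 3 ≤ R 0) (hRtend : Tendsto R atTop atTop) :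
    ∃ σ : ℕ → ℝ,
      (∀ᶠ n : ℕ in atTop,
        (1 / (2 * α)) * (R n) ^ (1 / (2 * α)) * Real.log (R n) ≤ σ n ∧
        σ n ≤ ((1 / (2 * α)) * (R n) ^ (1 / (2 * α)) * Real.log (R n)) ^ α ∧
        minMod f (σ n) = maxMod f ((1 / (2 * α)) * (R n) ^ (1 / (2 * α)) * Real.log (R n)) ∧
        ((1 / (2 * α)) * (R (n + 1)) ^ (1 / (2 * α)) * Real.log (R (n + 1))) ^ α ≤
          maxMod f ((1 / (2 * α)) * (R n) ^ (1 / (2 * α)) * Real.log (R n))) ∧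
      Tendsto σ atTop atTop ∧
      Filter.liminf (fun n : ℕ => ((minMod f (σ n) : ℝ) : EReal)) atTop = ⊤ := by
  obtain ⟨hdiff, -⟩ := hf
  have h2α : (0:ℝ) < 2 * α := by linarith
  set t : ℕ → ℝ := fun n => (1 / (2 * α)) * (R n) ^ (1 / (2 * α)) * Real.log (R n)
    with htdef
  -- t tends to infinity
  have htt : Tendsto t atTop atTop := by
    have hg : Tendsto (fun x : ℝ => (1 / (2 * α)) * x ^ (1 / (2 * α)) * Real.log x)
        atTop atTop := by
      have h1 := (tendsto_rpow_atTop (by positivity : (0:ℝ) < 1 / (2 * α))).atTop_mul_atTop₀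
        Real.tendsto_log_atTop
      have h2 := h1.const_mul_atTop (by positivity : (0:ℝ) < 1 / (2 * α))
      simpa [mul_assoc] using h2
    exact hg.comp hRtend
  -- choose σ
  have hσex : ∀ n : ℕ, ∃ s : ℝ, t n ≤ s ∧
      (r₀ ≤ t n → (s ≤ (t n) ^ α ∧ minMod f s = maxMod f (t n))) := by
    intro n
    by_cases h : r₀ ≤ t n
    · obtain ⟨s, h1, h2, h3⟩ := hstep1 (t n) h
      exact ⟨s, h1, fun _ => ⟨h2, h3⟩⟩
    · exact ⟨t n, le_refl _, fun h' => absurd h' h⟩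
  choose σ hσ1 hσ2 using hσex
  -- main eventual statement
  have hmain : ∀ᶠ n : ℕ in atTop, t n ≤ σ n ∧ σ n ≤ (t n) ^ α ∧
      minMod f (σ n) = maxMod f (t n) ∧ (t (n + 1)) ^ α ≤ maxMod f (t n) := by
    have hE1 : ∀ᶠ n : ℕ in atTop, r₀ ≤ t n := htt.eventually_ge_atTop r₀
    have hE2 : ∀ᶠ n : ℕ in atTop, Real.exp (2 * α) ≤ R n := hRtend.eventually_ge_atTop _
    have hE3 : ∀ᶠ n : ℕ in atTop, Real.exp (2 * α) ≤ R (n + 1) :=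
      (hRtend.comp (tendsto_add_atTop_nat 1)).eventually_ge_atTop _
    filter_upwards [hE1, hE2, hE3] with n h1 h2 h3
    have hRn0 : 0 < R n := lt_of_lt_of_le (Real.exp_pos _) h2
    have hsn : (0:ℝ) ≤ (R n) ^ (1 / (2 * α)) := (Real.rpow_pos_of_pos hRn0 _).le
    have hlog : 2 * α ≤ Real.log (R n) := by
      have := Real.log_le_log (Real.exp_pos _) h2
      rwa [Real.log_exp] at this
    have e1 : (1:ℝ) ≤ 1 / (2 * α) * Real.log (R n) := by
      rw [one_div, inv_mul_eq_div, le_div_iff₀ h2α]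
      linarith
    have hst : (R n) ^ (1 / (2 * α)) ≤ t n := by
      calc (R n) ^ (1 / (2 * α)) = (R n) ^ (1 / (2 * α)) * 1 := (mul_one _).symm
        _ ≤ (R n) ^ (1 / (2 * α)) * (1 / (2 * α) * Real.log (R n)) :=
            mul_le_mul_of_nonneg_left e1 hsn
        _ = t n := by rw [htdef]; ring
    have hmax : maxMod f ((R n) ^ (1 / (2 * α))) ≤ maxMod f (t n) :=
      maxMod_mono f hdiff hsn hst
    refine ⟨hσ1 n, (hσ2 n h1).1, (hσ2 n h1).2, ?_⟩
    calc (t (n + 1)) ^ α ≤ R (n + 1) := key_ineq hα h3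
      _ = maxMod f ((R n) ^ (1 / (2 * α))) := hRrec n
      _ ≤ maxMod f (t n) := hmax
  -- σ tends to infinity
  have hσt : Tendsto σ atTop atTop := tendsto_atTop_mono hσ1 htt
  -- minMod (σ n) tends to infinity
  have hLtend : Tendsto (fun n : ℕ => minMod f (σ n)) atTop atTop := by
    have h1 : Tendsto (fun n : ℕ => t (n + 1)) atTop atTop :=
      htt.comp (tendsto_add_atTop_nat 1)
    apply tendsto_atTop_mono' atTop ?_ h1
    filter_upwards [hmain, h1.eventually_ge_atTop 1] with n hm h1n
    have h2 : t (n + 1) ≤ (t (n + 1)) ^ α := by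
      calc t (n + 1) = (t (n + 1)) ^ (1:ℝ) := (Real.rpow_one _).symm
        _ ≤ (t (n + 1)) ^ α := Real.rpow_le_rpow_of_exponent_le h1n hα.le
    rw [hm.2.2.1]
    linarith [hm.2.2.2]
  have hlim : Tendsto (fun n : ℕ => ((minMod f (σ n) : ℝ) : EReal)) atTop (𝓝 ⊤) := by
    rw [EReal.tendsto_nhds_top_iff_real]
    intro x
    filter_upwards [hLtend.eventually_gt_atTop x] with n hn
    exact_mod_cast hn
  exact ⟨σ, hmain, hσt, hlim.liminf_eq⟩
end

section
/- Let f be a transcendental entire function and suppose that for every ε > 0 there is a set E ⊆ [1,∞) of logarithmic density zero such that log L(r,f) > (1−ε) log M(r,f) for every r ∉ E. Then there exist real numbers α > 1 and r₀ > 0 such that for every r ≥ r₀ there exists σ with r ≤ σ ≤ r^α and L(σ, f) = M(r, f). -/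
open Filter MeasureTheory Topology

/-- The chordal (spherical) distance on `ℂ ⊆ ℂ∞`. -/
noncomputable def chordalDist (z w : ℂ) : ℝ :=
  2 * ‖z - w‖ / Real.sqrt ((1 + ‖z‖ ^ 2) * (1 + ‖w‖ ^ 2))

/-- The Fatou set of `f`: points with a neighbourhood on which the family of iterates
`{f^[n] : n ∈ ℕ}` is equicontinuous with respect to the spherical metric. -/
def fatouSet (f : ℂ → ℂ) : Set ℂ :=
  {z | ∃ U ∈ nhds z, ∀ x ∈ U, ∀ ε > 0, ∃ δ > 0, ∀ y ∈ U,
    ‖y - x‖ < δ → ∀ n : ℕ, chordalDist (f^[n] x) (f^[n] y) < ε}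

/-- A measurable set `E ⊆ [1, ∞)` has logarithmic density zero if
`(1 / log R) ∫_{E ∩ [1,R]} dt/t → 0` as `R → ∞`. -/
def LogDensityZero (E : Set ℝ) : Prop :=
  MeasurableSet E ∧ E ⊆ Set.Ici 1 ∧
    Tendsto (fun R : ℝ => (∫ t in E ∩ Set.Icc 1 R, 1 / t) / Real.log R) atTop (nhds 0)

noncomputable def entCoeff (f : ℂ → ℂ) (n : ℕ) : ℂ := (cauchyPowerSeries f 0 1).coeff n

section Aux

variable {f : ℂ → ℂ}

lemma abs_le_maxMod (hc : Continuous f) {r : ℝ} {z : ℂ} (hz : z ∈ Metric.sphere (0:ℂ) r) :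
    ‖f z‖ ≤ maxMod f r :=
  le_csSup ((isCompact_sphere (0:ℂ) r).bddAbove_image
    (continuous_norm.comp hc).continuousOn) ⟨z, hz, rfl⟩

lemma minMod_nonneg (f : ℂ → ℂ) (r : ℝ) : 0 ≤ minMod f r :=
  Real.sInf_nonneg (by rintro x ⟨z, _, rfl⟩; exact norm_nonneg _)

lemma minMod_le_maxMod (hc : Continuous f) {r : ℝ} (hr : 0 ≤ r) :
    minMod f r ≤ maxMod f r := by
  obtain ⟨z, hz⟩ := (NormedSpace.sphere_nonempty (E := ℂ) (x := 0)).mpr hr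
  exact le_trans (csInf_le ⟨0, by rintro x ⟨w, _, rfl⟩; exact norm_nonneg _⟩ ⟨z, hz, rfl⟩)
    (abs_le_maxMod hc hz)

lemma entCoeff_hasSum (hd : Differentiable ℂ f) (z : ℂ) :
    HasSum (fun n => entCoeff f n * z ^ n) (f z) := by
  have h := (hd.hasFPowerSeriesOnBall 0 one_pos).hasSum (y := z)
    (by simp [EMetric.mem_ball])
  simpa [FormalMultilinearSeries.apply_eq_pow_smul_coeff, smul_eq_mul, mul_comm,
    entCoeff] using h

lemma entCoeff_est (hd : Differentiable ℂ f) {R : ℝ} (hR : 0 < R) (n : ℕ) :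
    ‖entCoeff f n‖ * R ^ n ≤ maxMod f R := by
  lift R to NNReal using hR.le with R' hR'
  have hR0 : 0 < R' := by exact_mod_cast hR
  have hp := hd.hasFPowerSeriesOnBall 0 hR0
  have hq := hd.hasFPowerSeriesOnBall 0 (one_pos (α := NNReal))
  have hpq : cauchyPowerSeries f 0 R' = cauchyPowerSeries f 0 1 :=
    hp.hasFPowerSeriesAt.eq_formalMultilinearSeries hq.hasFPowerSeriesAt
  have h1 : ‖entCoeff f n‖ = ‖cauchyPowerSeries f 0 (R' : ℝ) n‖ := by
    rw [FormalMultilinearSeries.norm_apply_eq_norm_coef, hpq]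
    simp [entCoeff]
  have h2 := norm_cauchyPowerSeries_le f 0 (R' : ℝ) n
  have hint : (∫ θ : ℝ in (0)..2 * Real.pi, ‖f (circleMap 0 (R' : ℝ) θ)‖)
      ≤ 2 * Real.pi * maxMod f R' := by
    have := intervalIntegral.integral_mono_on (a := 0) (b := 2 * Real.pi)
      (f := fun θ => ‖f (circleMap 0 (R' : ℝ) θ)‖) (g := fun _ => maxMod f R')
      Real.two_pi_pos.le
      ((hd.continuous.comp (continuous_circleMap 0 (R' : ℝ))).norm.intervalIntegrable _ _)
      (intervalIntegrable_const (μ := MeasureTheory.volume))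
      (fun θ _ => by
        simpa [] using
          abs_le_maxMod hd.continuous (circleMap_mem_sphere (0:ℂ) R'.coe_nonneg θ))
    simpa [mul_comm] using this
  have hM0 : 0 ≤ maxMod f R' := le_trans (norm_nonneg _) (by
    exact abs_le_maxMod hd.continuous (circleMap_mem_sphere (0:ℂ) R'.coe_nonneg 0))
  have h3 : ‖cauchyPowerSeries f 0 (R' : ℝ) n‖ ≤ maxMod f R' * (((R' : ℝ))⁻¹) ^ n := by
    simp only [NNReal.abs_eq] at h2
    refine h2.trans ?_
    apply mul_le_mul_of_nonneg_right _ (by positivity)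
    rw [inv_mul_le_iff₀ Real.two_pi_pos]
    exact hint
  rw [h1]
  calc ‖cauchyPowerSeries f 0 (R' : ℝ) n‖ * (R' : ℝ) ^ n
      ≤ (maxMod f R' * ((R' : ℝ)⁻¹) ^ n) * (R' : ℝ) ^ n := by
        exact mul_le_mul_of_nonneg_right h3 (by positivity)
    _ = maxMod f R' := by
        rw [mul_assoc, ← mul_pow, inv_mul_cancel₀ (ne_of_gt hR), one_pow, mul_one]

lemma entCoeff_infinite (hd : Differentiable ℂ f)
    (hnp : ¬∃ p : Polynomial ℂ, ∀ z, f z = p.eval z) (N : ℕ) :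
    ∃ n, N ≤ n ∧ entCoeff f n ≠ 0 := by
  by_contra hcon
  push_neg at hcon
  refine hnp ⟨∑ n ∈ Finset.range N, Polynomial.C (entCoeff f n) * Polynomial.X ^ n, fun z => ?_⟩
  have h1 : HasSum (fun n => entCoeff f n * z ^ n)
      (∑ n ∈ Finset.range N, entCoeff f n * z ^ n) := by
    apply hasSum_sum_of_ne_finset_zero
    intro n hn
    rw [hcon n (by simpa using Nat.le_of_not_lt (by simpa using hn)), zero_mul]
  rw [(entCoeff_hasSum hd z).unique h1]
  simp [Polynomial.eval_finset_sum]

lemma entCoeff_summable (hd : Differentiable ℂ f) {r : ℝ} (hr : 0 < r) :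
    Summable (fun n => ‖entCoeff f n‖ * r ^ n) := by
  have hsum : Summable (fun n : ℕ => maxMod f (2*r) * (1/2)^n) :=
    (summable_geometric_of_lt_one (by norm_num) (by norm_num)).mul_left _
  refine Summable.of_nonneg_of_le (fun n => by positivity) (fun n => ?_) hsum
  have h := entCoeff_est hd (by linarith : (0:ℝ) < 2*r) n
  calc ‖entCoeff f n‖ * r ^ n
      = (‖entCoeff f n‖ * (2*r) ^ n) * (1/2)^n := by
        rw [mul_assoc, ← mul_pow]; ring_nf
    _ ≤ maxMod f (2*r) * (1/2)^n := by
        exact mul_le_mul_of_nonneg_right h (by positivity)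

lemma maxMod_le_tsum (hd : Differentiable ℂ f) {r : ℝ} (hr : 0 < r) :
    maxMod f r ≤ ∑' n, ‖entCoeff f n‖ * r ^ n := by
  apply csSup_le (((NormedSpace.sphere_nonempty (E := ℂ) (x := 0)).mpr hr.le).image _)
  rintro b ⟨z, hz, rfl⟩
  have hzr : ‖z‖ = r := by simpa using hz
  have h1 := (entCoeff_hasSum hd z)
  have h2 : Summable (fun n => ‖entCoeff f n * z ^ n‖) := by
    have := entCoeff_summable hd hr
    refine this.congr fun n => ?_
    simp [map_mul, map_pow, hzr, mul_comm]
  calc ‖f z‖ = ‖∑' n, entCoeff f n * z ^ n‖ := by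
        rw [h1.tsum_eq]
    _ ≤ ∑' n, ‖entCoeff f n * z ^ n‖ := norm_tsum_le_tsum_norm h2
    _ = ∑' n, ‖entCoeff f n‖ * r ^ n := by
        congr 1; funext n; simp [map_mul, map_pow, hzr]

lemma exists_dominant (hd : Differentiable ℂ f) {r : ℝ} (hr : 4 ≤ r)
    (hM : 0 < maxMod f r) :
    ∃ m : ℕ, maxMod f r / 2 ≤ ‖entCoeff f m‖ * (r^2) ^ m := by
  by_contra hcon
  push_neg at hcon
  have hr0 : (0:ℝ) < r := by linarith
  have hfs := entCoeff_summable hd hr0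
  have hgs : Summable (fun n : ℕ => (maxMod f r / 2) * (1/r)^n) :=
    (summable_geometric_of_lt_one (by positivity) (by rw [div_lt_one hr0]; linarith)).mul_left _
  have hle : ∀ n, ‖entCoeff f n‖ * r ^ n ≤ (maxMod f r / 2) * (1/r)^n := by
    intro n
    have h := (hcon n).le
    calc ‖entCoeff f n‖ * r ^ n
        = (‖entCoeff f n‖ * (r^2) ^ n) * (1/r)^n := by
          rw [mul_assoc, ← mul_pow]; congr 2; field_simp
      _ ≤ (maxMod f r / 2) * (1/r)^n := mul_le_mul_of_nonneg_right h (by positivity)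
  have hlt : ‖entCoeff f 0‖ * r ^ 0 < (maxMod f r / 2) * (1/r)^0 := by
    simpa using hcon 0
  have h1 : ∑' n, ‖entCoeff f n‖ * r ^ n
      < ∑' n : ℕ, (maxMod f r / 2) * (1/r)^n := Summable.tsum_lt_tsum hle hlt hfs hgs
  have h2 : ∑' n : ℕ, (maxMod f r / 2) * (1/r)^n = (maxMod f r / 2) * (1 - 1/r)⁻¹ := by
    rw [tsum_mul_left, tsum_geometric_of_lt_one (by positivity) (by rw [div_lt_one hr0]; linarith)]
  have h3 : (maxMod f r / 2) * (1 - 1/r)⁻¹ ≤ maxMod f r := by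
    have h4 : (1 - 1/r)⁻¹ ≤ 2 := by
      rw [inv_le_comm₀ (by rw [sub_pos]; rw [div_lt_one hr0]; linarith) (by norm_num)]
      have : (1:ℝ)/r ≤ 1/4 := by
        apply div_le_div_of_nonneg_left <;> linarith
      linarith
    calc (maxMod f r / 2) * (1 - 1/r)⁻¹ ≤ (maxMod f r / 2) * 2 :=
          mul_le_mul_of_nonneg_left h4 (by positivity)
      _ = maxMod f r := by ring
  have := (maxMod_le_tsum hd hr0).trans_lt (h1.trans_le (h2 ▸ h3))
  exact absurd this (lt_irrefl _)

lemma growth (hd : Differentiable ℂ f) :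
    ∃ C : ℝ, 1 ≤ C ∧ ∀ r : ℝ, 4 ≤ r → 0 < maxMod f r → ∀ s : ℝ, r^(8:ℕ) ≤ s →
      (maxMod f r)^4 / (16 * C^3) ≤ maxMod f s := by
  refine ⟨max (maxMod f 1) 1, le_max_right _ _, fun r hr hM s hs => ?_⟩
  set C := max (maxMod f 1) 1 with hC
  have hC1 : (1:ℝ) ≤ C := le_max_right _ _
  have hr0 : (0:ℝ) < r := by linarith
  have hs0 : (0:ℝ) < s := lt_of_lt_of_le (by positivity) hs
  obtain ⟨m, hm⟩ := exists_dominant hd hr hM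
  set A := ‖entCoeff f m‖ with hA
  set X := (r^2)^m with hX
  have hX0 : (0:ℝ) < X := by positivity
  have hAC : A ≤ C := by
    have := entCoeff_est hd one_pos m
    simp only [one_pow, mul_one] at this
    exact this.trans (le_max_left _ _)
  have hXlb : maxMod f r / (2*C) ≤ X := by
    rw [div_le_iff₀ (by positivity)]
    have h1 : maxMod f r / 2 ≤ C * X := hm.trans (mul_le_mul_of_nonneg_right hAC hX0.le)
    calc maxMod f r = (maxMod f r / 2) * 2 := by ring
      _ ≤ (C * X) * 2 := by linarith
      _ = X * (2 * C) := by ring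
  have key : (maxMod f r / 2) * (maxMod f r / (2*C))^3 ≤ A * s ^ m := by
    calc (maxMod f r / 2) * (maxMod f r / (2*C))^3
        ≤ (A * X) * X^3 := by
          apply mul_le_mul hm (pow_le_pow_left₀ (by positivity) hXlb 3) (by positivity)
            (by positivity)
      _ = A * ((r^2)^m)^4 := by rw [hX]; ring
      _ = A * (r^(8:ℕ))^m := by
          rw [← pow_mul r 2 m, ← pow_mul r (2*m) 4, ← pow_mul r 8 m]
          congr 2
          ring
      _ ≤ A * s^m := by
          apply mul_le_mul_of_nonneg_left (pow_le_pow_left₀ (by positivity) hs m)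
            (norm_nonneg _)
  have := key.trans (entCoeff_est hd hs0 m)
  calc (maxMod f r)^4 / (16 * C^3)
      = (maxMod f r / 2) * (maxMod f r / (2*C))^3 := by field_simp; ring
    _ ≤ maxMod f s := this

lemma maxMod_large (hd : Differentiable ℂ f)
    (hnp : ¬∃ p : Polynomial ℂ, ∀ z, f z = p.eval z) (B : ℝ) :
    ∃ r₁ : ℝ, ∀ r, r₁ ≤ r → B ≤ maxMod f r := by
  obtain ⟨k, hk1, hk⟩ := entCoeff_infinite hd hnp 1
  set A := ‖entCoeff f k‖ with hA
  have hA0 : 0 < A := norm_pos_iff.mpr hk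
  refine ⟨max 1 ((|B|+1)/A), fun r hr => ?_⟩
  have hr1 : (1:ℝ) ≤ r := le_trans (le_max_left _ _) hr
  have hr0 : (0:ℝ) < r := by linarith
  have h1 : A * r ≤ A * r ^ k := by
    apply mul_le_mul_of_nonneg_left _ hA0.le
    calc r = r^1 := (pow_one r).symm
      _ ≤ r^k := pow_le_pow_right₀ hr1 hk1
  have h2 : |B| + 1 ≤ A * r := by
    rw [← div_le_iff₀' hA0]
    exact le_trans (le_max_right _ _) hr
  have := (entCoeff_est hd hr0 k)
  calc B ≤ |B| + 1 := by cases abs_cases B <;> linarith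
    _ ≤ A * r := h2
    _ ≤ A * r ^ k := h1
    _ ≤ maxMod f r := by rw [hA] at *; exact this

lemma sphere_smul_eq {x : ℝ} (hx : 0 ≤ x) :
    (fun z : ℂ => x • z) '' Metric.sphere (0:ℂ) 1 = Metric.sphere (0:ℂ) x := by
  ext w
  simp only [Set.mem_image, mem_sphere_zero_iff_norm]
  constructor
  · rintro ⟨z, hz, rfl⟩
    rw [norm_smul, hz, Real.norm_eq_abs, abs_of_nonneg hx, mul_one]
  · intro hw
    rcases hx.lt_or_eq with hx0 | hx0
    · refine ⟨x⁻¹ • w, ?_, by rw [smul_smul]; field_simp; simp⟩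
      rw [norm_smul, Real.norm_eq_abs, abs_of_nonneg (inv_nonneg.mpr hx), hw]
      field_simp
    · refine ⟨1, by simp, ?_⟩
      have hw0 : w = 0 := norm_eq_zero.mp (by rw [hw, ← hx0])
      rw [hw0, ← hx0]; simp

lemma minMod_cont (hd : Differentiable ℂ f) :
    ∃ g : ℝ → ℝ, Continuous g ∧ ∀ x : ℝ, 0 ≤ x → g x = minMod f x := by
  refine ⟨fun x => sInf ((fun z => ‖f (x • z)‖) '' Metric.sphere (0:ℂ) 1), ?_, ?_⟩
  · apply IsCompact.continuous_sInf (isCompact_sphere (0:ℂ) 1)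
    have : Continuous fun p : ℝ × ℂ => ‖f (p.1 • p.2)‖ := by
      apply continuous_norm.comp
      exact hd.continuous.comp (continuous_fst.smul continuous_snd)
    exact this
  · intro x hx
    unfold minMod
    rw [← sphere_smul_eq hx, Set.image_image]

lemma exists_avoid {E : Set ℝ} (hE : LogDensityZero E) :
    ∃ R₁ : ℝ, ∀ r : ℝ, 4 ≤ r → R₁ ≤ r → ∃ s, r^(8:ℕ) ≤ s ∧ s ≤ r^(12:ℕ) ∧ s ∉ E := by
  obtain ⟨hmeas, hsub, htend⟩ := hE
  have h8 : ∀ᶠ R in atTop, (∫ t in E ∩ Set.Icc 1 R, 1 / t) / Real.log R < 1/8 :=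
    htend.eventually (Filter.Tendsto.eventually_lt_const (by norm_num) tendsto_id)
  obtain ⟨R₁, hR₁⟩ := eventually_atTop.mp h8
  refine ⟨R₁, fun r hr4 hrR => ?_⟩
  by_contra hcon
  push_neg at hcon
  have hr1 : (1:ℝ) ≤ r := by linarith
  have hr0 : (0:ℝ) < r := by linarith
  have hlogr : 0 < Real.log r := Real.log_pos (by linarith)
  have hab : (r:ℝ)^(8:ℕ) ≤ r^(12:ℕ) := pow_le_pow_right₀ hr1 (by norm_num)
  have h1le : (1:ℝ) ≤ r^(8:ℕ) := one_le_pow₀ hr1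
  have hRr : R₁ ≤ r^(12:ℕ) := le_trans hrR (le_self_pow₀ hr1 (by norm_num))
  have hq := hR₁ _ hRr
  have hint : IntegrableOn (fun t : ℝ => 1/t) (E ∩ Set.Icc 1 (r^(12:ℕ))) := by
    apply IntegrableOn.mono_set _ Set.inter_subset_right
    apply ContinuousOn.integrableOn_Icc
    apply ContinuousOn.div continuousOn_const continuousOn_id
    intro t ht
    exact ne_of_gt (lt_of_lt_of_le one_pos ht.1)
  have hmono : ∫ t in Set.Icc (r^(8:ℕ)) (r^(12:ℕ)), 1/t
      ≤ ∫ t in E ∩ Set.Icc 1 (r^(12:ℕ)), 1/t := by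
    apply setIntegral_mono_set hint
    · filter_upwards [self_mem_ae_restrict (hmeas.inter measurableSet_Icc)] with t ht
      have h1t : (1:ℝ) ≤ t := ht.2.1
      have : (0:ℝ) < t := by linarith
      positivity
    · apply HasSubset.Subset.eventuallyLE
      intro t ht
      exact ⟨hcon t ht.1 ht.2, le_trans h1le ht.1, ht.2⟩
  have hcomp : ∫ t in Set.Icc (r^(8:ℕ)) (r^(12:ℕ)), (1:ℝ)/t = 4 * Real.log r := by
    rw [MeasureTheory.integral_Icc_eq_integral_Ioc, ← intervalIntegral.integral_of_le hab,
      integral_one_div (Set.notMem_uIcc_of_lt (by positivity) (by positivity)),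
      show (r^(12:ℕ))/(r^(8:ℕ)) = r^(4:ℕ) by
        rw [div_eq_iff (by positivity), ← pow_add],
      Real.log_pow]
    norm_num
  have hpos : 0 < Real.log (r^(12:ℕ)) := by
    rw [Real.log_pow]; positivity
  rw [div_lt_iff₀ hpos, Real.log_pow] at hq
  rw [hcomp] at hmono
  push_cast at hq
  linarith

end Aux

/-- Step 1 of the proof: under the minimum-modulus hypothesis outside sets of logarithmic
density zero, there are `α > 1` and `r₀ > 0` such that for every `r ≥ r₀` there is
`σ ∈ [r, r^α]` with `L(σ,f) = M(r,f)`. -/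
theorem exists_sigma_of_log_density_hypothesis (f : ℂ → ℂ) (hf : TranscendentalEntire f)
    (h : ∀ ε > (0 : ℝ), ∃ E : Set ℝ, LogDensityZero E ∧
      ∀ r ≥ (1 : ℝ), r ∉ E →
        Real.log (minMod f r) > (1 - ε) * Real.log (maxMod f r)) :
    ∃ α > (1 : ℝ), ∃ r₀ > (0 : ℝ), ∀ r ≥ r₀,
      ∃ σ : ℝ, r ≤ σ ∧ σ ≤ r ^ α ∧ minMod f σ = maxMod f r := by
  obtain ⟨hd, hnp⟩ := hf
  obtain ⟨C, hC1, hgrow⟩ := growth hd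
  obtain ⟨E, hE, hEmin⟩ := h (1/2) (by norm_num)
  obtain ⟨R₁, havoid⟩ := exists_avoid hE
  set B := Real.exp (max 1 ((1/2) * Real.log (16*C^3))) with hB
  obtain ⟨r₁, hr₁⟩ := maxMod_large hd hnp B
  obtain ⟨g, hgc, hgeq⟩ := minMod_cont hd
  refine ⟨12, by norm_num, max 4 (max r₁ R₁),
    lt_of_lt_of_le (by norm_num : (0:ℝ) < 4) (le_max_left _ _), fun r hr => ?_⟩
  have hr4 : (4:ℝ) ≤ r := le_trans (le_max_left _ _) hr
  have hrr₁ : r₁ ≤ r := le_trans (le_trans (le_max_left _ _) (le_max_right _ _)) hr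
  have hrR₁ : R₁ ≤ r := le_trans (le_trans (le_max_right _ _) (le_max_right _ _)) hr
  have hr1 : (1:ℝ) ≤ r := by linarith
  have hr0 : (0:ℝ) < r := by linarith
  have hMB : B ≤ maxMod f r := hr₁ r hrr₁
  have hM1 : 1 < maxMod f r := by
    refine lt_of_lt_of_le ?_ hMB
    rw [hB]
    have h0 : (0:ℝ) < max 1 ((1/2) * Real.log (16*C^3)) :=
      lt_of_lt_of_le one_pos (le_max_left _ _)
    have := Real.exp_lt_exp.2 h0
    rwa [Real.exp_zero] at this
  have hM0 : 0 < maxMod f r := by linarith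
  have hlogMr : max 1 ((1/2) * Real.log (16*C^3)) ≤ Real.log (maxMod f r) := by
    rw [hB] at hMB
    calc max 1 ((1/2) * Real.log (16*C^3))
        = Real.log (Real.exp (max 1 ((1/2) * Real.log (16*C^3)))) := (Real.log_exp _).symm
      _ ≤ Real.log (maxMod f r) := Real.log_le_log (Real.exp_pos _) hMB
  obtain ⟨s, hs1, hs2, hsE⟩ := havoid r hr4 hrR₁
  have hs0 : (0:ℝ) < s := lt_of_lt_of_le (by positivity) hs1
  have hs1' : (1:ℝ) ≤ s := le_trans (one_le_pow₀ hr1) hs1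
  have hMs := hgrow r hr4 hM0 s hs1
  set K := 16 * C ^ 3 with hK
  have hK1 : (1:ℝ) ≤ K := by
    have : (1:ℝ) ≤ C^3 := one_le_pow₀ hC1
    rw [hK]; linarith
  have hK0 : (0:ℝ) < K := by linarith
  have hQ0 : 0 < (maxMod f r)^4 / K := by positivity
  have hlogMs : Real.log ((maxMod f r)^4 / K) ≤ Real.log (maxMod f s) :=
    Real.log_le_log hQ0 hMs
  have hcalc : Real.log ((maxMod f r)^4 / K) = 4 * Real.log (maxMod f r) - Real.log K := by
    rw [Real.log_div (by positivity) (by positivity), Real.log_pow]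
    norm_num
  have hmin := hEmin s hs1' hsE
  have hhalf : (1/2) * Real.log K ≤ Real.log (maxMod f r) :=
    le_trans (le_max_right _ _) hlogMr
  have h1' : (1:ℝ) ≤ Real.log (maxMod f r) := le_trans (le_max_left _ _) hlogMr
  rw [hcalc] at hlogMs
  have hlt : Real.log (maxMod f r) < Real.log (minMod f s) := by
    nlinarith [hmin, hlogMs, hhalf]
  have hminpos : 1 < minMod f s := by
    by_contra hle
    push_neg at hle
    have hnp' : Real.log (minMod f s) ≤ 0 := Real.log_nonpos (minMod_nonneg f s) hle
    linarith
  have hlt' : maxMod f r < minMod f s := by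
    have h2 := Real.exp_lt_exp.2 hlt
    rwa [Real.exp_log hM0, Real.exp_log (by linarith : (0:ℝ) < minMod f s)] at h2
  have hrs : r ≤ s := le_trans (le_self_pow₀ hr1 (by norm_num)) hs1
  have hmem : maxMod f r ∈ Set.Icc (g r) (g s) := by
    constructor
    · rw [hgeq r hr0.le]; exact minMod_le_maxMod hd.continuous hr0.le
    · rw [hgeq s hs0.le]; exact hlt'.le
  obtain ⟨σ, hσmem, hσeq⟩ := intermediate_value_Icc hrs hgc.continuousOn hmem
  refine ⟨σ, hσmem.1, ?_, ?_⟩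
  · calc σ ≤ s := hσmem.2
      _ ≤ r^(12:ℕ) := hs2
      _ = r ^ (12:ℝ) := by
          rw [← Real.rpow_natCast r 12]
          norm_num
  · rw [← hgeq σ (le_trans hr0.le hσmem.1), hσeq]
end
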